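/- For every prime number p, the set T = T₁ ∪ {wₙ} is the p-gluing of T₁ and {wₙ}; concretely: ℤT₁ ∩ ℤ{wₙ} = ℤ{wₙ}, and there exists α ∈ ℕ such that p^α·wₙ ∈ ℕT₁ ∩ ℕ{wₙ}. -/

import Mathlib

set_option maxHeartbeats 1000000

/-- Auxiliary lemma: any multiple `N • wₙ` with `N ≥ (f-1)²` lies in `ℕT₁`. -/
lemma stmt5_mult_mem (n : ℕ) (hn : 3 ≤ n) (f g : ℕ)
    (hg : 0 < g) (hgf : g < f) (hng : (n - 1) * f ≤ n * g)
    (v : Fin n → Fin n → ℤ)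
    (hv : ∀ i : Fin n, v i = Pi.single i ((f * g : ℕ) : ℤ))
    (w : Fin (n - 1) → Fin n → ℤ)
    (hw : ∀ i : Fin (n - 1), w i = ((f : ℤ) - (g : ℤ)) •
      (Pi.single (Fin.castLE (Nat.sub_le n 1) i) (1 : ℤ) +
        Pi.single (⟨n - 1, Nat.sub_lt (by omega) Nat.one_pos⟩ : Fin n) (1 : ℤ)))
    (wn : Fin n → ℤ)
    (hwn : wn = (g : ℤ) ^ 2 •
        (∑ i : Fin (n - 1), Pi.single (Fin.castLE (Nat.sub_le n 1) i) (1 : ℤ) : Fin n → ℤ) +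
      ((g : ℤ) * (((n : ℤ) - 1) * (g : ℤ) - ((n : ℤ) - 2) * (f : ℤ))) •
        Pi.single (⟨n - 1, Nat.sub_lt (by omega) Nat.one_pos⟩ : Fin n) (1 : ℤ))
    (N : ℕ) (hN : (f - 1) * (f - 1) ≤ N) :
    ((N : ℤ)) • wn ∈ AddSubmonoid.closure (Set.range v ∪ Set.range w) := by
  have hf : 0 < f := lt_trans hg hgf
  obtain ⟨k, hk1, hk2⟩ : ∃ k : ℕ, N ≤ f * k ∧ f * k ≤ N + f - 1 := by
    have hd := Nat.div_add_mod (N + f - 1) f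
    have hm : (N + f - 1) % f < f := Nat.mod_lt _ hf
    refine ⟨(N + f - 1) / f, ?_, ?_⟩ <;>
    · generalize h : f * ((N + f - 1) / f) = m at hd ⊢
      omega
  have hKf1 : (N:ℤ) ≤ (k:ℤ) * (f:ℤ) := by
    have := hk1
    zify at this
    linarith
  have hKf2 : (k:ℤ) * (f:ℤ) ≤ (N:ℤ) + (f:ℤ) - 1 := by
    have h1 : (1:ℕ) ≤ N + f := by omega
    have := hk2
    zify [h1] at this
    linarith
  -- cast basic hypotheses
  have hn' : (3:ℤ) ≤ (n:ℤ) := by exact_mod_cast hn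
  have hg' : (0:ℤ) < (g:ℤ) := by exact_mod_cast hg
  have hgf' : (g:ℤ) < (f:ℤ) := by exact_mod_cast hgf
  have hng' : ((n:ℤ) - 1) * (f:ℤ) ≤ (n:ℤ) * (g:ℤ) := by
    have h1 : (1:ℕ) ≤ n := by omega
    zify [h1] at hng
    exact_mod_cast hng
  have hN' : ((f:ℤ) - 1) * ((f:ℤ) - 1) ≤ (N:ℤ) := by
    have h1 : (1:ℕ) ≤ f := hf
    zify [h1] at hN
    exact_mod_cast hN
  have hK0 : (0:ℤ) ≤ (k:ℤ) := Int.natCast_nonneg _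
  -- key inequality chain
  have h5 : ((n:ℤ) - 2) * (f:ℤ) < ((n:ℤ) - 1) * (g:ℤ) := by
    nlinarith [mul_le_mul_of_nonneg_left hng' (show (0:ℤ) ≤ (n:ℤ) - 2 by linarith),
      mul_le_mul_of_nonneg_left hng' (show (0:ℤ) ≤ (n:ℤ) - 1 by linarith), hg', hn']
  have h5' : ((n:ℤ) - 2) * (f:ℤ) + 1 ≤ ((n:ℤ) - 1) * (g:ℤ) := Int.add_one_le_iff.mpr h5
  have h3 : ((n:ℤ) - 1) * ((f:ℤ) - (g:ℤ)) ≤ (f:ℤ) - 1 := by nlinarith [h5']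
  have hstep2 : (k:ℤ) * ((f:ℤ) - 1) ≤ (N:ℤ) := by
    have hF0 : (0:ℤ) < (f:ℤ) := by exact_mod_cast hf
    have t : (k:ℤ) * ((f:ℤ) - 1) * (f:ℤ) ≤ (N:ℤ) * (f:ℤ) := by
      nlinarith [mul_le_mul_of_nonneg_right hKf2 (show (0:ℤ) ≤ (f:ℤ) - 1 by linarith), hN']
    exact le_of_mul_le_mul_right t hF0
  have hkey : ((n:ℤ) - 1) * ((k:ℤ) * ((f:ℤ) - (g:ℤ))) ≤ (N:ℤ) := by
    have t1 : (k:ℤ) * (((n:ℤ) - 1) * ((f:ℤ) - (g:ℤ))) ≤ (k:ℤ) * ((f:ℤ) - 1) :=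
      mul_le_mul_of_nonneg_left h3 hK0
    linarith [t1, hstep2]
  have hKFG : (0:ℤ) ≤ (k:ℤ) * ((f:ℤ) - (g:ℤ)) := mul_nonneg hK0 (by linarith)
  -- the three coefficients
  have hA : (0:ℤ) ≤ (N:ℤ) - (k:ℤ) * ((f:ℤ) - (g:ℤ)) := by
    have t : (k:ℤ) * ((f:ℤ) - (g:ℤ)) ≤ ((n:ℤ) - 1) * ((k:ℤ) * ((f:ℤ) - (g:ℤ))) :=
      le_mul_of_one_le_left hKFG (by linarith)
    linarith
  have hB : (0:ℤ) ≤ (k:ℤ) * (f:ℤ) * (g:ℤ) - (N:ℤ) * (g:ℤ) := by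
    linarith [mul_le_mul_of_nonneg_right hKf1 hg'.le]
  have hAn : (0:ℤ) ≤ (N:ℤ) - ((n:ℤ) - 1) * ((k:ℤ) * ((f:ℤ) - (g:ℤ))) := by linarith
  -- notation
  have hle : n - 1 ≤ n := by omega
  have hsingle : ∀ (y : Fin n) (c : ℤ), (Pi.single y c : Fin n → ℤ) = c • (Pi.single y (1:ℤ) : Fin n → ℤ) := by
    intro y c
    funext z
    simp [Pi.single_apply, mul_ite]
  have hVsum : ∑ i : Fin (n-1), v (Fin.castLE hle i)
      = ((f:ℤ) * (g:ℤ)) • (∑ i : Fin (n - 1), Pi.single (Fin.castLE hle i) (1 : ℤ) : Fin n → ℤ) := by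
    rw [Finset.smul_sum]
    refine Finset.sum_congr rfl fun i _ => ?_
    rw [hv, hsingle, Nat.cast_mul]
  have hWsum : ∑ i : Fin (n-1), w i
      = ((f:ℤ) - (g:ℤ)) • ((∑ i : Fin (n - 1), Pi.single (Fin.castLE hle i) (1 : ℤ) : Fin n → ℤ)
          + ((n:ℤ) - 1) • Pi.single (⟨n - 1, by omega⟩ : Fin n) (1 : ℤ)) := by
    have : ∑ i : Fin (n-1), w i = ((f:ℤ) - (g:ℤ)) •
        ∑ i : Fin (n-1), (Pi.single (Fin.castLE hle i) (1 : ℤ)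
          + Pi.single (⟨n - 1, by omega⟩ : Fin n) (1 : ℤ)) := by
      rw [Finset.smul_sum]
      exact Finset.sum_congr rfl fun i _ => hw i
    rw [this]
    congr 1
    rw [Finset.sum_add_distrib, Finset.sum_const, Finset.card_univ, Fintype.card_fin]
    congr 1
    rw [← natCast_zsmul]
    congr 1
    have h1 : (1:ℕ) ≤ n := by omega
    push_cast [h1]
    ring
  have hvlast : v (⟨n - 1, by omega⟩ : Fin n)
      = ((f:ℤ) * (g:ℤ)) • Pi.single (⟨n - 1, by omega⟩ : Fin n) (1 : ℤ) := by
    rw [hv, hsingle, Nat.cast_mul]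
  -- the key identity
  have keyEq : (N:ℤ) • wn =
      ((N:ℤ) - (k:ℤ) * ((f:ℤ) - (g:ℤ))) • (∑ i : Fin (n-1), v (Fin.castLE hle i))
      + ((k:ℤ) * (f:ℤ) * (g:ℤ) - (N:ℤ) * (g:ℤ)) • (∑ i : Fin (n-1), w i)
      + ((N:ℤ) - ((n:ℤ) - 1) * ((k:ℤ) * ((f:ℤ) - (g:ℤ)))) • v (⟨n - 1, by omega⟩ : Fin n) := by
    rw [hwn, hVsum, hWsum, hvlast]
    module
  -- membership
  have hcl : ∀ (c : ℤ), 0 ≤ c → ∀ x ∈ AddSubmonoid.closure (Set.range v ∪ Set.range w),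
      c • x ∈ AddSubmonoid.closure (Set.range v ∪ Set.range w) := by
    intro c hc x hx
    lift c to ℕ using hc
    rw [natCast_zsmul]
    exact nsmul_mem hx _
  rw [keyEq]
  refine AddSubmonoid.add_mem _ (AddSubmonoid.add_mem _ ?_ ?_) ?_
  · exact hcl _ hA _ (AddSubmonoid.sum_mem _ fun i _ =>
      AddSubmonoid.subset_closure (Or.inl ⟨_, rfl⟩))
  · exact hcl _ hB _ (AddSubmonoid.sum_mem _ fun i _ =>
      AddSubmonoid.subset_closure (Or.inr ⟨_, rfl⟩))
  · exact hcl _ hAn _ (AddSubmonoid.subset_closure (Or.inl ⟨_, rfl⟩))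

/-- In the setting of the paper (`n ≥ 3`, coprime `f > g > 0`,
`(n-1)f ≤ ng`), for every prime `p` the set `T = T₁ ∪ {wₙ}` is the `p`-gluing of
`T₁ = {v₁,…,vₙ,w₁,…,w_{n-1}}` and `{wₙ}`; concretely: `ℤT₁ ∩ ℤ{wₙ} = ℤ{wₙ}` and there
is `α ∈ ℕ` with `p^α·wₙ ∈ ℕT₁ ∩ ℕ{wₙ}`. -/
theorem stmt5 (n : ℕ) (hn : 3 ≤ n) (f g : ℕ) (hco : Nat.Coprime f g)
    (hg : 0 < g) (hgf : g < f) (hng : (n - 1) * f ≤ n * g)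
    (v : Fin n → Fin n → ℤ)
    (hv : ∀ i : Fin n, v i = Pi.single i ((f * g : ℕ) : ℤ))
    (w : Fin (n - 1) → Fin n → ℤ)
    (hw : ∀ i : Fin (n - 1), w i = ((f : ℤ) - (g : ℤ)) •
      (Pi.single (Fin.castLE (by omega) i) (1 : ℤ) +
        Pi.single (⟨n - 1, by omega⟩ : Fin n) (1 : ℤ)))
    (wn : Fin n → ℤ)
    (hwn : wn = (g : ℤ) ^ 2 •
        (∑ i : Fin (n - 1), Pi.single (Fin.castLE (by omega) i) (1 : ℤ) : Fin n → ℤ) +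
      ((g : ℤ) * (((n : ℤ) - 1) * (g : ℤ) - ((n : ℤ) - 2) * (f : ℤ))) •
        Pi.single (⟨n - 1, by omega⟩ : Fin n) (1 : ℤ)) :
    ∀ p : ℕ, p.Prime →
      (AddSubgroup.closure (Set.range v ∪ Set.range w) ⊓ AddSubgroup.closure {wn} =
        AddSubgroup.closure {wn}) ∧
      ∃ α : ℕ, ((p ^ α : ℕ) : ℤ) • wn ∈
        AddSubmonoid.closure (Set.range v ∪ Set.range w) ⊓ AddSubmonoid.closure {wn} := by
  intro p hp
  set T : Set (Fin n → ℤ) := Set.range v ∪ Set.range w with hT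
  have hmult : ∀ N : ℕ, (f - 1) * (f - 1) ≤ N →
      ((N : ℤ)) • wn ∈ AddSubmonoid.closure T :=
    fun N hN => stmt5_mult_mem n hn f g hg hgf hng v hv w hw wn hwn N hN
  constructor
  · -- ℤT₁ ∩ ℤ{wₙ} = ℤ{wₙ}
    have hsub : AddSubmonoid.closure T ≤ (AddSubgroup.closure T).toAddSubmonoid :=
      AddSubmonoid.closure_le.mpr AddSubgroup.subset_closure
    have h1 : (((f - 1) * (f - 1) : ℕ) : ℤ) • wn ∈ AddSubgroup.closure T :=
      hsub (hmult _ le_rfl)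
    have h2 : (((f - 1) * (f - 1) + 1 : ℕ) : ℤ) • wn ∈ AddSubgroup.closure T :=
      hsub (hmult _ (Nat.le_succ _))
    have hwnmem : wn ∈ AddSubgroup.closure T := by
      have h3 := AddSubgroup.sub_mem _ h2 h1
      have e : (((f - 1) * (f - 1) + 1 : ℕ) : ℤ) • wn - (((f - 1) * (f - 1) : ℕ) : ℤ) • wn
          = wn := by
        rw [← sub_smul]
        push_cast
        simp
      rwa [e] at h3
    rw [inf_eq_right]
    exact (AddSubgroup.closure_le _).mpr (Set.singleton_subset_iff.mpr hwnmem)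
  · -- the p-power multiple
    refine ⟨f * f, AddSubmonoid.mem_inf.mpr ⟨hmult _ ?_, ?_⟩⟩
    · calc (f - 1) * (f - 1) ≤ f * f := Nat.mul_le_mul (Nat.sub_le f 1) (Nat.sub_le f 1)
        _ ≤ 2 ^ (f * f) := (Nat.lt_two_pow_self).le
        _ ≤ p ^ (f * f) := Nat.pow_le_pow_left hp.two_le _
    · rw [natCast_zsmul]
      exact nsmul_mem (AddSubmonoid.subset_closure (Set.mem_singleton wn)) _
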